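/- Let D be a central division algebra of prime degree p over F (char F ∤ p, primitive p-th root of unity ρ ∈ F) and let x, z be p-central with z having exactly two eigencomponents z_i, z_j (i ≠ j) with respect to conjugation by x, and x having exactly two eigencomponents with respect to conjugation by z. Set y = x z - ρ^i z x. Then y = (ρ^j - ρ^i) z x_j, y is p-central, y x = ρ^{-j} x y up to the appropriate root of unity commutation (x and y ρ-commute), and z and y ρ-commute; hence x and z are connected by a chain x — y — z in which consecutive elements ρ-power-commute. -/
import Mathlib

section aux
variable {F D : Type*} [Field F] [DivisionRing D] [Algebra F D]

lemma rc_smul_pow_right (c : F) (u v : D) (h : u * v = c • (v * u)) :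
    ∀ n : ℕ, u * v ^ n = c ^ n • (v ^ n * u) := by
  intro n
  induction n with
  | zero => simp
  | succ n ih =>
    calc u * v ^ (n+1) = (u * v ^ n) * v := by rw [pow_succ, mul_assoc]
    _ = c ^ n • (v ^ n * (u * v)) := by rw [ih, smul_mul_assoc, mul_assoc]
    _ = c ^ n • (v ^ n * (c • (v * u))) := by rw [h]
    _ = c ^ (n+1) • (v ^ (n+1) * u) := by
        rw [mul_smul_comm, smul_smul, pow_succ, pow_succ, mul_assoc, mul_comm (c^n) c]

lemma rc_pow_pow (c : F) (u v : D) (h : u * v = c • (v * u)) (m n : ℕ) :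
    u ^ m * v ^ n = c ^ (m * n) • (v ^ n * u ^ m) := by
  induction m with
  | zero => simp
  | succ m ih =>
    calc u ^ (m+1) * v ^ n = u ^ m * (u * v ^ n) := by
          rw [pow_succ, mul_assoc]
    _ = u ^ m * (c ^ n • (v ^ n * u)) := by rw [rc_smul_pow_right c u v h n]
    _ = c ^ n • ((u ^ m * v ^ n) * u) := by rw [mul_smul_comm, mul_assoc]
    _ = c ^ n • ((c ^ (m*n) • (v ^ n * u ^ m)) * u) := by rw [ih]
    _ = c ^ ((m+1) * n) • (v ^ n * u ^ (m+1)) := by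
        rw [smul_mul_assoc, smul_smul, ← pow_add, mul_assoc, ← pow_succ, Nat.succ_mul,
          Nat.add_comm (m*n) n]

lemma rc_flip (c c' : F) (hcc' : c * c' = 1) (a b : D) (h : a * b = c • (b * a)) :
    b * a = c' • (a * b) := by
  rw [h, smul_smul, mul_comm c' c, hcc', one_smul]

lemma rc_char_sum (p : ℕ) (ρ : F) (hρ : IsPrimitiveRoot ρ p) (k : ℕ) :
    ∑ m ∈ Finset.range p, ρ ^ (k * m) = if p ∣ k then (p : F) else 0 := by
  have hpow : ∀ m, ρ ^ (k * m) = (ρ ^ k) ^ m := fun m => by rw [pow_mul]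
  simp only [hpow]
  split_ifs with h
  · have h1 : ρ ^ k = 1 := (hρ.pow_eq_one_iff_dvd k).mpr h
    simp [h1]
  · have h1 : ρ ^ k ≠ 1 := fun hc => h ((hρ.pow_eq_one_iff_dvd k).mp hc)
    have h2 : (∑ m ∈ Finset.range p, (ρ ^ k) ^ m) * (ρ ^ k - 1) = (ρ ^ k) ^ p - 1 :=
      geom_sum_mul (ρ ^ k) p
    have h3 : (ρ ^ k) ^ p = 1 := by
      rw [← pow_mul, mul_comm, pow_mul, hρ.pow_eq_one, one_pow]
    rw [h3, sub_self] at h2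
    rcases mul_eq_zero.mp h2 with h4 | h4
    · exact h4
    · exact absurd (sub_eq_zero.mp h4) h1

lemma rc_smul_zero {c : F} {d : D} (h : c • d = 0) (hd : d ≠ 0) : c = 0 := by
  rw [Algebra.smul_def] at h
  rcases mul_eq_zero.mp h with h1 | h1
  · have := (algebraMap F D).injective
    simpa using this (h1.trans (map_zero (algebraMap F D)).symm)
  · exact absurd h1 hd

lemma rc_iter (L : Module.End F D) (v : D) (c : F) (h : L v = c • v) (m : ℕ) :
    (L ^ m) v = c ^ m • v := by
  induction m with
  | zero => simp
  | succ m ih =>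
    rw [pow_succ, Module.End.mul_apply, h, map_smul, ih, smul_smul, ← pow_succ']

lemma rc_triple {ι : Type*} [Fintype ι] (s t : Finset ℕ) (h : ι → ℕ → ℕ → D) :
    ∑ m ∈ s, ∑ n ∈ t, ∑ i : ι, h i m n = ∑ i : ι, ∑ m ∈ s, ∑ n ∈ t, h i m n :=
  calc ∑ m ∈ s, ∑ n ∈ t, ∑ i : ι, h i m n
      = ∑ m ∈ s, ∑ i : ι, ∑ n ∈ t, h i m n :=
        Finset.sum_congr rfl fun m _ => Finset.sum_comm
    _ = ∑ i : ι, ∑ m ∈ s, ∑ n ∈ t, h i m n := Finset.sum_comm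

lemma rc_linearIndependent
    (p : ℕ) (hp : p.Prime) (hpF : (p : F) ≠ 0)
    (ρ : F) (hρ : IsPrimitiveRoot ρ p)
    (x u : D) (hx0 : x ≠ 0) (hu0 : u ≠ 0)
    (e f : ℕ) (he : ¬ p ∣ e) (hf : ¬ p ∣ f) (hef : ρ ^ e * ρ ^ f = 1)
    (hcomm : u * x = ρ ^ e • (x * u)) :
    LinearIndependent F (fun ab : Fin p × Fin p => u ^ (ab.1 : ℕ) * x ^ (ab.2 : ℕ)) := by
  set v : Fin p × Fin p → D := fun ab => u ^ (ab.1 : ℕ) * x ^ (ab.2 : ℕ) with hv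
  have hfcomm : x * u = ρ ^ f • (u * x) := rc_flip _ _ hef u x hcomm
  have hxU : x * u⁻¹ = ρ ^ e • (u⁻¹ * x) := by
    have h1 := congrArg (fun d => u⁻¹ * d * u⁻¹) hcomm
    simpa [mul_assoc, inv_mul_cancel_left₀ hu0, mul_inv_cancel₀ hu0, mul_smul_comm,
      smul_mul_assoc] using h1
  -- conjugation endomorphisms
  set σ : Module.End F D := (LinearMap.mulRight F x⁻¹).comp (LinearMap.mulLeft F x) with hσ
  set τ : Module.End F D := (LinearMap.mulRight F u⁻¹).comp (LinearMap.mulLeft F u) with hτ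
  have hσv : ∀ i : Fin p × Fin p, σ (v i) = ((ρ ^ f) ^ (i.1 : ℕ)) • v i := by
    intro i
    show x * (u ^ (i.1:ℕ) * x ^ (i.2:ℕ)) * x⁻¹ = _
    rw [← mul_assoc, rc_smul_pow_right (ρ ^ f) x u hfcomm (i.1:ℕ), smul_mul_assoc,
      smul_mul_assoc]
    congr 1
    rw [mul_assoc, mul_assoc]
    congr 1
    rw [← mul_assoc, ← pow_succ', pow_succ, mul_assoc, mul_inv_cancel₀ hx0, mul_one]
  have hτv : ∀ i : Fin p × Fin p, τ (v i) = ((ρ ^ e) ^ (i.2 : ℕ)) • v i := by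
    intro i
    show u * (u ^ (i.1:ℕ) * x ^ (i.2:ℕ)) * u⁻¹ = _
    have hxb : x ^ (i.2:ℕ) * u⁻¹ = (ρ ^ e) ^ (i.2:ℕ) • (u⁻¹ * x ^ (i.2:ℕ)) := by
      have := rc_pow_pow (ρ ^ e) x u⁻¹ hxU (i.2:ℕ) 1
      simpa using this
    rw [mul_assoc, mul_assoc, hxb, mul_smul_comm, mul_smul_comm]
    congr 1
    rw [← mul_assoc, ← pow_succ', pow_succ, mul_assoc, ← mul_assoc u u⁻¹,
      mul_inv_cancel₀ hu0, one_mul]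
  have hv0 : ∀ i : Fin p × Fin p, v i ≠ 0 :=
    fun i => mul_ne_zero (pow_ne_zero _ hu0) (pow_ne_zero _ hx0)
  rw [Fintype.linearIndependent_iff]
  intro g hg i₀
  obtain ⟨a₀, b₀⟩ := i₀
  -- the projected relations
  have hmn : ∀ m n : ℕ,
      ∑ i : Fin p × Fin p, ((((ρ ^ f) ^ (i.1:ℕ)) ^ m * ((ρ ^ e) ^ (i.2:ℕ)) ^ n) * g i) • v i
        = 0 := by
    intro m n
    have h0 : (τ ^ n) ((σ ^ m) (∑ i : Fin p × Fin p, g i • v i)) = 0 := by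
      rw [hg]; simp
    rw [map_sum, map_sum] at h0
    calc ∑ i : Fin p × Fin p, ((((ρ ^ f) ^ (i.1:ℕ)) ^ m * ((ρ ^ e) ^ (i.2:ℕ)) ^ n) * g i) • v i
        = ∑ i : Fin p × Fin p, (τ ^ n) ((σ ^ m) (g i • v i)) := by
          refine Finset.sum_congr rfl fun i _ => ?_
          symm
          simp only [map_smul]
          rw [rc_iter σ (v i) _ (hσv i) m, map_smul, rc_iter τ (v i) _ (hτv i) n]
          simp only [smul_smul]
          rw [mul_comm (g i)]
    _ = 0 := h0
  -- weighted sums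
  set Ca : Fin p → F := fun a =>
    ∑ m ∈ Finset.range p, ρ ^ ((f * ((a:ℕ) + (p - (a₀:ℕ)))) * m) with hCa
  set Cb : Fin p → F := fun b =>
    ∑ n ∈ Finset.range p, ρ ^ ((e * ((b:ℕ) + (p - (b₀:ℕ)))) * n) with hCb
  have final : ∑ i : Fin p × Fin p, (g i * Ca i.1 * Cb i.2) • v i = 0 := by
    have reorder : ∑ i : Fin p × Fin p, (g i * Ca i.1 * Cb i.2) • v i
        = ∑ m ∈ Finset.range p, ∑ n ∈ Finset.range p,
            (ρ ^ ((f * (p - (a₀:ℕ))) * m) * ρ ^ ((e * (p - (b₀:ℕ))) * n)) •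
            (∑ i : Fin p × Fin p,
              ((((ρ ^ f) ^ (i.1:ℕ)) ^ m * ((ρ ^ e) ^ (i.2:ℕ)) ^ n) * g i) • v i) := by
      simp only [Finset.smul_sum, smul_smul]
      rw [rc_triple]
      refine Finset.sum_congr rfl fun i _ => ?_
      have hscal : g i * Ca i.1 * Cb i.2
          = ∑ m ∈ Finset.range p, ∑ n ∈ Finset.range p,
              ρ ^ ((f * (p - (a₀:ℕ))) * m) * ρ ^ ((e * (p - (b₀:ℕ))) * n) *
                ((((ρ ^ f) ^ (i.1:ℕ)) ^ m * ((ρ ^ e) ^ (i.2:ℕ)) ^ n) * g i) := by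
        simp only [hCa, hCb]
        rw [mul_assoc, Finset.sum_mul_sum, Finset.mul_sum]
        refine Finset.sum_congr rfl fun m _ => ?_
        rw [Finset.mul_sum]
        refine Finset.sum_congr rfl fun n _ => ?_
        simp only [← pow_mul]
        ring
      rw [hscal, Finset.sum_smul]
      exact Finset.sum_congr rfl fun m _ => Finset.sum_smul
    rw [reorder]
    refine Finset.sum_eq_zero fun m _ => Finset.sum_eq_zero fun n _ => ?_
    rw [hmn m n, smul_zero]
  -- evaluating the character sums
  have hCa_eval : ∀ a : Fin p, Ca a = if a = a₀ then (p:F) else 0 := by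
    intro a
    simp only [hCa]
    rw [rc_char_sum p ρ hρ (f * ((a:ℕ) + (p - (a₀:ℕ))))]
    by_cases h : a = a₀
    · subst h
      rw [if_pos rfl, if_pos]
      rw [Nat.add_sub_cancel' (Nat.le_of_lt a.isLt)]
      exact dvd_mul_left p f
    · rw [if_neg h, if_neg]
      intro hd
      rcases (Nat.Prime.dvd_mul hp).mp hd with h' | h'
      · exact hf h'
      · have ha := a.isLt
        have ha₀ := a₀.isLt
        have hne : (a:ℕ) + (p - (a₀:ℕ)) ≠ 0 := by omega
        have hlt : (a:ℕ) + (p - (a₀:ℕ)) < 2 * p := by omega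
        have := Nat.eq_of_dvd_of_lt_two_mul hne h' hlt
        exact h (Fin.ext (by omega))
  have hCb_eval : ∀ b : Fin p, Cb b = if b = b₀ then (p:F) else 0 := by
    intro b
    simp only [hCb]
    rw [rc_char_sum p ρ hρ (e * ((b:ℕ) + (p - (b₀:ℕ))))]
    by_cases h : b = b₀
    · subst h
      rw [if_pos rfl, if_pos]
      rw [Nat.add_sub_cancel' (Nat.le_of_lt b.isLt)]
      exact dvd_mul_left p e
    · rw [if_neg h, if_neg]
      intro hd
      rcases (Nat.Prime.dvd_mul hp).mp hd with h' | h'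
      · exact he h'
      · have hb := b.isLt
        have hb₀ := b₀.isLt
        have hne : (b:ℕ) + (p - (b₀:ℕ)) ≠ 0 := by omega
        have hlt : (b:ℕ) + (p - (b₀:ℕ)) < 2 * p := by omega
        have := Nat.eq_of_dvd_of_lt_two_mul hne h' hlt
        exact h (Fin.ext (by omega))
  have hsingle : ∑ i : Fin p × Fin p, (g i * Ca i.1 * Cb i.2) • v i
      = (g (a₀, b₀) * (p:F) * (p:F)) • v (a₀, b₀) := by
    rw [Finset.sum_eq_single (a₀, b₀)]
    · rw [hCa_eval a₀, hCb_eval b₀, if_pos rfl, if_pos rfl]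
    · intro i _ hne
      by_cases h1 : i.1 = a₀
      · have h2 : i.2 ≠ b₀ := fun h2 => hne (Prod.ext h1 h2)
        rw [hCb_eval i.2, if_neg h2, mul_zero, zero_smul]
      · rw [hCa_eval i.1, if_neg h1, mul_zero, zero_mul, zero_smul]
    · intro h
      exact absurd (Finset.mem_univ _) h
  rw [hsingle] at final
  have := rc_smul_zero final (hv0 (a₀, b₀))
  rcases mul_eq_zero.mp this with h' | h'
  · rcases mul_eq_zero.mp h' with h'' | h''
    · exact h''
    · exact absurd h'' hpF
  · exact absurd h' hpF


lemma rc_smul_ne_zero {c : F} {d : D} (hc : c ≠ 0) (hd : d ≠ 0) : c • d ≠ 0 :=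
  fun h => hc (rc_smul_zero h hd)

lemma rc_commute_all
    (p : ℕ) (hp : p.Prime) (hpF : (p : F) ≠ 0)
    (ρ : F) (hρ : IsPrimitiveRoot ρ p)
    (hdim : Module.finrank F D = p ^ 2)
    (x u : D) (hx0 : x ≠ 0) (hu0 : u ≠ 0)
    (e f : ℕ) (he : ¬ p ∣ e) (hf : ¬ p ∣ f) (hef : ρ ^ e * ρ ^ f = 1)
    (hcomm : u * x = ρ ^ e • (x * u))
    (w : D) (hwx : w * x = x * w) (hwu : w * u = u * w) :
    ∀ d : D, w * d = d * w := by
  have hli := rc_linearIndependent p hp hpF ρ hρ x u hx0 hu0 e f he hf hef hcomm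
  haveI : Nonempty (Fin p) := ⟨⟨0, hp.pos⟩⟩
  have hspan := hli.span_eq_top_of_card_eq_finrank (by rw [hdim]; simp [sq])
  intro d
  have hle : Submodule.span F
      (Set.range fun ab : Fin p × Fin p => u ^ (ab.1:ℕ) * x ^ (ab.2:ℕ))
      ≤ LinearMap.ker (LinearMap.mulLeft F w - LinearMap.mulRight F w) := by
    rw [Submodule.span_le]
    rintro _ ⟨ab, rfl⟩
    have hcx : Commute w x := hwx
    have hcu : Commute w u := hwu
    have hc : Commute w (u ^ (ab.1:ℕ) * x ^ (ab.2:ℕ)) :=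
      (hcu.pow_right _).mul_right (hcx.pow_right _)
    simp only [SetLike.mem_coe, LinearMap.mem_ker, LinearMap.sub_apply,
      LinearMap.mulLeft_apply, LinearMap.mulRight_apply, sub_eq_zero]
    exact hc
  have hd : d ∈ Submodule.span F
      (Set.range fun ab : Fin p × Fin p => u ^ (ab.1:ℕ) * x ^ (ab.2:ℕ)) := by
    rw [hspan]; trivial
  have := hle hd
  simpa only [LinearMap.mem_ker, LinearMap.sub_apply, LinearMap.mulLeft_apply,
    LinearMap.mulRight_apply, sub_eq_zero] using this

end aux

/-- Rost chain of length 2 for an edge of weight 2 in both directions: with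
`x = x_i + x_j` the eigencomponents of `x` for conjugation by `z`, and
`z = z_{-i} + z_{-j}` those of `z` for conjugation by `x`, the element
`y = xz - ρ^i zx` equals `(ρ^j - ρ^i) z x_j`, is `p`-central, and
`ρ`-power-commutes with both `x` and `z`. -/
theorem rost_chain_length_two
    {F D : Type*} [Field F] [DivisionRing D] [Algebra F D]
    (p : ℕ) (hp : p.Prime) (hpF : (p : F) ≠ 0)
    (ρ : F) (hρ : IsPrimitiveRoot ρ p)
    (hcentral : ∀ a : D, (∀ b : D, a * b = b * a) → ∃ c : F, a = algebraMap F D c)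
    (hdim : Module.finrank F D = p ^ 2)
    (x z : D) (α β : F) (hα : α ≠ 0) (hβ : β ≠ 0)
    (hxp : x ^ p = algebraMap F D α) (hzp : z ^ p = algebraMap F D β)
    (hxnc : ∀ s : F, x ≠ algebraMap F D s) (hznc : ∀ s : F, z ≠ algebraMap F D s)
    (i j : ZMod p) (hij : i ≠ j)
    (xi xj zmi zmj : D)
    (hxi0 : xi ≠ 0) (hxj0 : xj ≠ 0) (hzmi0 : zmi ≠ 0) (hzmj0 : zmj ≠ 0)
    (hx : x = xi + xj) (hz : z = zmi + zmj)
    (hxiZ : xi * z = ρ ^ i.val • (z * xi)) (hxjZ : xj * z = ρ ^ j.val • (z * xj))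
    (hzmiX : zmi * x = ρ ^ (-i).val • (x * zmi))
    (hzmjX : zmj * x = ρ ^ (-j).val • (x * zmj)) :
    (x * z - ρ ^ i.val • (z * x) = (ρ ^ j.val - ρ ^ i.val) • (z * xj)) ∧
    (∃ c : F, c ≠ 0 ∧ (x * z - ρ ^ i.val • (z * x)) ^ p = algebraMap F D c) ∧
    (∃ k : ℕ, (x * z - ρ ^ i.val • (z * x)) * x
        = ρ ^ k • (x * (x * z - ρ ^ i.val • (z * x)))) ∧
    (∃ k : ℕ, (x * z - ρ ^ i.val • (z * x)) * z
        = ρ ^ k • (z * (x * z - ρ ^ i.val • (z * x)))) := by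
  haveI : NeZero p := ⟨hp.ne_zero⟩
  have hx0 : x ≠ 0 := fun h => hxnc 0 (by rw [h, map_zero])
  have hz0 : z ≠ 0 := fun h => hznc 0 (by rw [h, map_zero])
  have hval : ∀ k : ZMod p, ρ ^ (k.val) * ρ ^ ((-k).val) = 1 := by
    intro k
    rw [← pow_add, hρ.pow_eq_one_iff_dvd, ← ZMod.natCast_eq_zero_iff]
    push_cast
    rw [ZMod.natCast_zmod_val, ZMod.natCast_zmod_val]
    exact add_neg_cancel k
  have hvalne : ∀ k l : ZMod p, k ≠ l → ρ ^ k.val ≠ ρ ^ l.val := by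
    intro k l hkl hc
    exact hkl (by
      have := hρ.pow_inj (ZMod.val_lt k) (ZMod.val_lt l) hc
      rw [← ZMod.natCast_zmod_val k, ← ZMod.natCast_zmod_val l, this])
  have hcij : ρ ^ j.val - ρ ^ i.val ≠ 0 := sub_ne_zero.mpr (hvalne j i (Ne.symm hij))
  -- Part 1: the two expressions for y
  have h1 : x * z - ρ ^ i.val • (z * x) = (ρ ^ j.val - ρ ^ i.val) • (z * xj) := by
    calc x * z - ρ ^ i.val • (z * x)
        = (xi + xj) * z - ρ ^ i.val • (z * (xi + xj)) := by rw [← hx]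
      _ = ρ ^ i.val • (z * xi) + ρ ^ j.val • (z * xj)
            - ρ ^ i.val • (z * xi + z * xj) := by rw [add_mul, hxiZ, hxjZ, mul_add]
      _ = (ρ ^ j.val - ρ ^ i.val) • (z * xj) := by module
  have hxzmi : x * zmi = ρ ^ i.val • (zmi * x) := by
    refine rc_flip (ρ ^ ((-i).val)) (ρ ^ i.val) ?_ zmi x hzmiX
    rw [mul_comm]; exact hval i
  have hxzmj : x * zmj = ρ ^ j.val • (zmj * x) := by
    refine rc_flip (ρ ^ ((-j).val)) (ρ ^ j.val) ?_ zmj x hzmjX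
    rw [mul_comm]; exact hval j
  have h1' : x * z - ρ ^ i.val • (z * x) = (ρ ^ j.val - ρ ^ i.val) • (zmj * x) := by
    calc x * z - ρ ^ i.val • (z * x)
        = x * (zmi + zmj) - ρ ^ i.val • ((zmi + zmj) * x) := by rw [← hz]
      _ = ρ ^ i.val • (zmi * x) + ρ ^ j.val • (zmj * x)
            - ρ ^ i.val • (zmi * x + zmj * x) := by rw [mul_add, hxzmi, hxzmj, add_mul]
      _ = (ρ ^ j.val - ρ ^ i.val) • (zmj * x) := by module
  obtain ⟨y, hy⟩ : ∃ y' : D, y' = x * z - ρ ^ i.val • (z * x) := ⟨_, rfl⟩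
  obtain ⟨c', hc'⟩ : ∃ d : F, d = ρ ^ j.val - ρ ^ i.val := ⟨_, rfl⟩
  rw [← hy, ← hc']
  rw [← hc'] at hcij
  rw [← hy, ← hc'] at h1 h1'
  have hy0 : y ≠ 0 := by
    rw [h1]
    exact rc_smul_ne_zero hcij (mul_ne_zero hz0 hxj0)
  -- Part 3
  have hLx : y * x = c' • (zmj * x * x) := by rw [h1', smul_mul_assoc]
  have hRx : x * y = (c' * ρ ^ j.val) • (zmj * x * x) := by
    rw [h1', mul_smul_comm, ← mul_assoc, hxzmj, smul_mul_assoc, smul_smul]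
  have hyx : y * x = ρ ^ ((-j).val) • (x * y) := by
    rw [hLx, hRx, smul_smul]
    have hsc : ρ ^ ((-j).val) * (c' * ρ ^ j.val) = c' := by
      linear_combination c' * hval j
    rw [hsc]
  -- Part 4
  have hLz : y * z = (c' * ρ ^ j.val) • (z * (z * xj)) := by
    rw [h1, smul_mul_assoc, mul_assoc, hxjZ, mul_smul_comm, smul_smul]
  have hRz : z * y = c' • (z * (z * xj)) := by
    rw [h1, mul_smul_comm]
  have hyz : y * z = ρ ^ (j.val) • (z * y) := by
    rw [hLz, hRz, smul_smul, mul_comm (ρ ^ j.val) c']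
  -- y^p commutes with x and z
  have hpow1 : ∀ k : ZMod p, (ρ ^ (k.val)) ^ p = 1 := by
    intro k
    rw [← pow_mul, mul_comm, pow_mul, hρ.pow_eq_one, one_pow]
  have hpx : y ^ p * x = x * y ^ p := by
    have h := rc_pow_pow (ρ ^ ((-j).val)) y x hyx p 1
    simp only [pow_one, mul_one] at h
    rw [hpow1 (-j), one_smul] at h
    exact h
  have hpz : y ^ p * z = z * y ^ p := by
    have h := rc_pow_pow (ρ ^ (j.val)) y z hyz p 1
    simp only [pow_one, mul_one] at h
    rw [hpow1 j, one_smul] at h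
    exact h
  -- y^p commutes with the separate eigencomponents of z
  have hwzm : y ^ p * zmi = zmi * y ^ p ∧ y ^ p * zmj = zmj * y ^ p := by
    have hAx : (y ^ p * zmi - zmi * y ^ p) * x
        = ρ ^ ((-i).val) • (x * (y ^ p * zmi - zmi * y ^ p)) := by
      rw [sub_mul, mul_sub, smul_sub]
      congr 1
      · rw [mul_assoc, hzmiX, mul_smul_comm, ← mul_assoc, hpx, mul_assoc]
      · rw [mul_assoc, hpx, ← mul_assoc, hzmiX, smul_mul_assoc, mul_assoc]
    have hBx : (y ^ p * zmj - zmj * y ^ p) * x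
        = ρ ^ ((-j).val) • (x * (y ^ p * zmj - zmj * y ^ p)) := by
      rw [sub_mul, mul_sub, smul_sub]
      congr 1
      · rw [mul_assoc, hzmjX, mul_smul_comm, ← mul_assoc, hpx, mul_assoc]
      · rw [mul_assoc, hpx, ← mul_assoc, hzmjX, smul_mul_assoc, mul_assoc]
    have hAB : (y ^ p * zmi - zmi * y ^ p) + (y ^ p * zmj - zmj * y ^ p) = 0 := by
      rw [sub_add_sub_comm, ← mul_add, ← add_mul, ← hz, hpz, sub_self]
    have hB : (y ^ p * zmj - zmj * y ^ p) = -(y ^ p * zmi - zmi * y ^ p) :=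
      (neg_eq_of_add_eq_zero_right hAB).symm
    rw [hB] at hBx
    rw [neg_mul, mul_neg, smul_neg, neg_inj] at hBx
    have h2 : (ρ ^ ((-i).val) - ρ ^ ((-j).val)) •
        (x * (y ^ p * zmi - zmi * y ^ p)) = 0 := by
      rw [sub_smul, ← hAx, ← hBx, sub_self]
    have h3 : x * (y ^ p * zmi - zmi * y ^ p) = 0 := by
      by_contra hne
      exact hvalne (-i) (-j) (fun hc => hij (neg_injective hc)) (sub_eq_zero.mp
        (by simpa using rc_smul_zero h2 hne))
    have hA0 : y ^ p * zmi - zmi * y ^ p = 0 := by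
      rcases mul_eq_zero.mp h3 with h | h
      · exact absurd h hx0
      · exact h
    refine ⟨sub_eq_zero.mp hA0, sub_eq_zero.mp ?_⟩
    rw [hB, hA0, neg_zero]
  -- choose a good eigencomponent
  obtain ⟨u, k, hu0, hk0, hucomm, hwu⟩ :
      ∃ (u : D) (k : ZMod p), u ≠ 0 ∧ k ≠ 0 ∧
        u * x = ρ ^ ((-k).val) • (x * u) ∧ y ^ p * u = u * y ^ p := by
    by_cases hi0 : i = 0
    · exact ⟨zmj, j, hzmj0, fun h => hij (hi0.trans h.symm), hzmjX, hwzm.2⟩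
    · exact ⟨zmi, i, hzmi0, hi0, hzmiX, hwzm.1⟩
  have hmk0 : (-k) ≠ 0 := neg_ne_zero.mpr hk0
  have hnd : ∀ l : ZMod p, l ≠ 0 → ¬ p ∣ l.val := fun l hl =>
    Nat.not_dvd_of_pos_of_lt (Nat.pos_of_ne_zero (by simpa [ZMod.val_eq_zero] using hl))
      (ZMod.val_lt l)
  have hef : ρ ^ ((-k).val) * ρ ^ (k.val) = 1 := by rw [mul_comm]; exact hval k
  have hall := rc_commute_all p hp hpF ρ hρ hdim x u hx0 hu0 ((-k).val) (k.val)
    (hnd (-k) hmk0) (hnd k hk0) hef hucomm (y ^ p) hpx hwu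
  obtain ⟨c0, hc0⟩ := hcentral (y ^ p) hall
  have hc00 : c0 ≠ 0 := by
    intro h
    rw [h, map_zero] at hc0
    exact pow_ne_zero p hy0 hc0
  exact ⟨h1, ⟨c0, hc00, hc0⟩, ⟨(-j).val, hyx⟩, ⟨j.val, hyz⟩⟩
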